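/- Let M and k be positive integers with k > 1 and set q = k·M. Let χ be a Dirichlet character modulo M, let d be a positive integer with d | q, and let ψ be a Dirichlet character modulo d. Then for every integer n, ∑_{a mod q} χ(a) · S_ψ(a, n; q) = 0. -/

import Mathlib

open Complex

/-- `eAdd q x = exp(2πi x / q)`. -/
noncomputable def eAdd (q : ℕ) (x : ℤ) : ℂ :=
  Complex.exp (2 * Real.pi * Complex.I * x / q)

/-- The Kloosterman sum `S(m, n; q) = ∑_{x mod q, (x,q)=1} e_q(m x + n x*)`. -/
noncomputable def klo (m n : ℤ) (q : ℕ) [NeZero q] : ℂ :=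
  ∑ x : (ZMod q)ˣ,
    eAdd q (m * ((x : ZMod q).val : ℤ) + n * (((x⁻¹ : (ZMod q)ˣ) : ZMod q).val : ℤ))

/-- The twisted Kloosterman sum `S_ψ(m, n; q)` for a Dirichlet character `ψ` mod `d`, `d ∣ q`. -/
noncomputable def kloTwist {d : ℕ} (ψ : DirichletCharacter ℂ d) (m n : ℤ) (q : ℕ)
    [NeZero q] (h : d ∣ q) : ℂ :=
  ∑ x : (ZMod q)ˣ,
    ψ (ZMod.castHom h (ZMod d) (x : ZMod q)) *
      eAdd q (m * ((x : ZMod q).val : ℤ) + n * (((x⁻¹ : (ZMod q)ˣ) : ZMod q).val : ℤ))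

lemma eAdd_add (q : ℕ) (x y : ℤ) : eAdd q (x + y) = eAdd q x * eAdd q y := by
  rw [eAdd, eAdd, eAdd, ← Complex.exp_add]
  congr 1
  push_cast
  ring

lemma eAdd_self_mul (q : ℕ) [NeZero q] (t : ℤ) : eAdd q ((q : ℤ) * t) = 1 := by
  have hq : (q : ℂ) ≠ 0 := Nat.cast_ne_zero.mpr (NeZero.ne q)
  rw [eAdd, show 2 * (Real.pi : ℂ) * Complex.I * ((q : ℤ) * t : ℤ) / q
      = (t : ℤ) * (2 * Real.pi * Complex.I) by push_cast; field_simp]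
  exact Complex.exp_int_mul_two_pi_mul_I t

lemma eAdd_congr (q : ℕ) [NeZero q] {x y : ℤ} (h : (x : ZMod q) = (y : ZMod q)) :
    eAdd q x = eAdd q y := by
  rw [ZMod.intCast_eq_intCast_iff] at h
  obtain ⟨t, ht⟩ := h.dvd
  have hy : y = x + (q : ℤ) * t := by linarith
  rw [hy, eAdd_add, eAdd_self_mul, mul_one]

lemma eAdd_mul_left (k M : ℕ) [NeZero k] [NeZero M] (m : ℤ) :
    eAdd (k * M) ((M : ℤ) * m) = eAdd k m := by
  have hk : (k : ℂ) ≠ 0 := Nat.cast_ne_zero.mpr (NeZero.ne k)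
  have hM : (M : ℂ) ≠ 0 := Nat.cast_ne_zero.mpr (NeZero.ne M)
  rw [eAdd, eAdd]
  congr 1
  push_cast
  field_simp

lemma eAdd_ne_one (k : ℕ) [NeZero k] (m : ℤ) (hm : ¬ (k : ℤ) ∣ m) : eAdd k m ≠ 1 := by
  intro h
  have hk : (k : ℂ) ≠ 0 := Nat.cast_ne_zero.mpr (NeZero.ne k)
  rw [eAdd, Complex.exp_eq_one_iff] at h
  obtain ⟨t, ht⟩ := h
  apply hm
  refine ⟨t, ?_⟩
  have h2 : (2 : ℂ) * Real.pi * Complex.I ≠ 0 := by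
    simp [Real.pi_ne_zero, Complex.I_ne_zero]
  have hc : (m : ℂ) = (t : ℂ) * k := by
    field_simp at ht
    apply mul_left_cancel₀ h2
    rw [ht]; ring
  have hz : m = t * k := by exact_mod_cast hc
  rw [hz]; ring

lemma inner_sum_zero (M k : ℕ) [NeZero M] [NeZero k] (hk : 1 < k)
    (χ : DirichletCharacter ℂ M) (m : ℕ) (hm : ¬ k ∣ m) :
    ∑ a : ZMod (k * M),
      χ (ZMod.castHom (dvd_mul_left M k) (ZMod M) a) * eAdd (k * M) ((a.val : ℤ) * (m : ℤ))
      = 0 := by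
  haveI : NeZero (k * M) := ⟨Nat.mul_ne_zero (NeZero.ne k) (NeZero.ne M)⟩
  set q := k * M with hq
  set f : ZMod q → ℂ := fun a =>
    χ (ZMod.castHom (dvd_mul_left M k) (ZMod M) a) * eAdd q ((a.val : ℤ) * (m : ℤ)) with hf
  have hshift : ∀ a : ZMod q, f (a + (M : ZMod q)) = eAdd k m * f a := by
    intro a
    have h1 : χ (ZMod.castHom (dvd_mul_left M k) (ZMod M) (a + (M : ZMod q)))
        = χ (ZMod.castHom (dvd_mul_left M k) (ZMod M) a) := by
      rw [map_add, map_natCast, ZMod.natCast_self, add_zero]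
    have h2 : eAdd q (((a + (M : ZMod q)).val : ℤ) * (m : ℤ))
        = eAdd k m * eAdd q ((a.val : ℤ) * (m : ℤ)) := by
      have hcast : ((((a + (M : ZMod q)).val : ℤ) * (m : ℤ) : ℤ) : ZMod q)
          = ((((a.val : ℤ) + (M : ℤ)) * (m : ℤ) : ℤ) : ZMod q) := by
        push_cast
        simp [ZMod.natCast_val, ZMod.cast_id]
      rw [eAdd_congr q hcast, show ((a.val : ℤ) + (M : ℤ)) * (m : ℤ)
          = (a.val : ℤ) * (m : ℤ) + (M : ℤ) * (m : ℤ) by ring, eAdd_add,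
        eAdd_mul_left k M (m : ℤ)]
      ring
    simp only [hf, h1, h2]
    ring
  have hsum : ∑ a : ZMod q, f a = eAdd k m * ∑ a : ZMod q, f a := by
    rw [Finset.mul_sum]
    calc ∑ a : ZMod q, f a = ∑ a : ZMod q, f (a + (M : ZMod q)) :=
          (Fintype.sum_equiv (Equiv.addRight (M : ZMod q)) _ _ (fun a => rfl)).symm
      _ = ∑ a : ZMod q, eAdd k m * f a := by simp_rw [hshift]
  have hne : eAdd k m ≠ 1 := by
    refine eAdd_ne_one k (m : ℤ) ?_
    intro hdvd
    exact hm (Int.ofNat_dvd.mp hdvd)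
  have : (1 - eAdd k m) * ∑ a : ZMod q, f a = 0 := by
    rw [sub_mul, one_mul, ← hsum, sub_self]
  have h1 : (1 : ℂ) - eAdd k m ≠ 0 := sub_ne_zero.mpr (Ne.symm hne)
  exact (mul_eq_zero.mp this).resolve_left h1

/-- Vanishing of the complete character sum `∑_{a mod q} χ(a) S_ψ(a, n; q)` for `q = kM`, `k > 1`. -/
theorem stmt_11 (M k : ℕ) [NeZero M] [NeZero k] (hk : 1 < k)
    (χ : DirichletCharacter ℂ M) (d : ℕ) (hd : d ∣ k * M) (ψ : DirichletCharacter ℂ d)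
    (n : ℤ) :
    ∑ a : ZMod (k * M),
      χ (ZMod.castHom (dvd_mul_left M k) (ZMod M) a) *
        kloTwist ψ (a.val : ℤ) n (k * M) hd = 0 := by
  haveI : NeZero (k * M) := ⟨Nat.mul_ne_zero (NeZero.ne k) (NeZero.ne M)⟩
  simp only [kloTwist, Finset.mul_sum]
  rw [Finset.sum_comm]
  apply Finset.sum_eq_zero
  intro x _
  have hm : ¬ k ∣ ((x : ZMod (k * M)) : ZMod (k * M)).val := by
    intro hdvd
    have hcop := ZMod.val_coe_unit_coprime x
    have h1 : k ∣ 1 := hcop ▸ Nat.dvd_gcd hdvd (dvd_mul_right k M)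
    have := Nat.dvd_one.mp h1
    omega
  have key := inner_sum_zero M k hk χ ((x : ZMod (k * M)).val) hm
  calc ∑ a : ZMod (k * M),
        χ (ZMod.castHom (dvd_mul_left M k) (ZMod M) a) *
          (ψ (ZMod.castHom hd (ZMod d) (x : ZMod (k * M))) *
            eAdd (k * M) ((a.val : ℤ) * (((x : ZMod (k * M))).val : ℤ) +
              n * ((((x⁻¹ : (ZMod (k * M))ˣ) : ZMod (k * M))).val : ℤ)))
      = (ψ (ZMod.castHom hd (ZMod d) (x : ZMod (k * M))) *
          eAdd (k * M) (n * ((((x⁻¹ : (ZMod (k * M))ˣ) : ZMod (k * M))).val : ℤ))) *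
        ∑ a : ZMod (k * M),
          χ (ZMod.castHom (dvd_mul_left M k) (ZMod M) a) *
            eAdd (k * M) ((a.val : ℤ) * (((x : ZMod (k * M))).val : ℤ)) := by
        rw [Finset.mul_sum]
        apply Finset.sum_congr rfl
        intro a _
        rw [eAdd_add]
        ring
      _ = 0 := by rw [key, mul_zero]
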